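/- Let f be a monic complex polynomial of degree n ≥ 2 all of whose roots lie on a straight line through the origin, i.e. there exists θ ∈ ℝ such that every root of f is of the form t·e^{iθ} with t ∈ ℝ. Then f = X^n if and only if 0 is a double root of the (n-2)nd derivative of f, i.e. f^{(n-2)}(0) = 0 and f^{(n-1)}(0) = 0. -/

import Mathlib

open Polynomial

lemma my_esymm_one (s : Multiset ℂ) : s.esymm 1 = s.sum := by
  simp [Multiset.esymm, Multiset.powersetCard_one, Multiset.map_map, Function.comp_def]

lemma my_esymm_cons (a : ℂ) (s : Multiset ℂ) (k : ℕ) :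
    (a ::ₘ s).esymm (k + 1) = s.esymm (k + 1) + a * s.esymm k := by
  simp only [Multiset.esymm, Multiset.powersetCard_cons, Multiset.map_add, Multiset.sum_add,
    Multiset.map_map, Function.comp_def, Multiset.prod_cons]
  rw [Multiset.sum_map_mul_left]

lemma my_newton2 (s : Multiset ℂ) :
    (s.map (· ^ 2)).sum = s.sum ^ 2 - 2 * s.esymm 2 := by
  induction s using Multiset.induction with
  | empty => simp [Multiset.esymm, Multiset.powersetCard_zero_right]
  | cons a s ih =>
    rw [Multiset.map_cons, Multiset.sum_cons, Multiset.sum_cons, my_esymm_cons, my_esymm_one, ih]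
    ring

theorem stmt8 (n : ℕ) (hn : 2 ≤ n) (f : Polynomial ℂ) (hf : f.Monic)
    (hdeg : f.natDegree = n)
    (hline : ∃ θ : ℝ, ∀ z : ℂ, f.eval z = 0 →
      ∃ t : ℝ, z = (t : ℂ) * Complex.exp ((θ : ℂ) * Complex.I)) :
    f = Polynomial.X ^ n ↔
      ((Polynomial.derivative^[n - 2] f).eval 0 = 0 ∧
        (Polynomial.derivative^[n - 1] f).eval 0 = 0) := by
  have hev : ∀ (p : ℂ[X]) (k : ℕ), (derivative^[k] p).eval 0 = (k.factorial : ℂ) * p.coeff k := by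
    intro p k
    rw [← Polynomial.coeff_zero_eq_eval_zero, Polynomial.coeff_iterate_derivative]
    simp [Nat.descFactorial_self, nsmul_eq_mul]
  constructor
  · rintro rfl
    constructor <;> rw [hev, Polynomial.coeff_X_pow, if_neg (by omega)] <;> ring
  · rintro ⟨h2, h1⟩
    rw [hev] at h2 h1
    have hfac : ∀ k : ℕ, (k.factorial : ℂ) ≠ 0 := fun k => by
      exact_mod_cast Nat.cast_ne_zero.mpr (Nat.factorial_ne_zero k)
    have hc2 : f.coeff (n - 2) = 0 := by
      rcases mul_eq_zero.mp h2 with h | h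
      · exact absurd h (hfac _)
      · exact h
    have hc1 : f.coeff (n - 1) = 0 := by
      rcases mul_eq_zero.mp h1 with h | h
      · exact absurd h (hfac _)
      · exact h
    have hsplits : f.Splits := IsAlgClosed.splits f
    have hcard : Multiset.card f.roots = f.natDegree :=
      (Polynomial.splits_iff_card_roots.mp hsplits)
    -- esymm 1 and esymm 2 of roots vanish
    have he1 : f.roots.esymm 1 = 0 := by
      have := Polynomial.coeff_eq_esymm_roots_of_card hcard
        (k := n - 1) (by omega)
      rw [hdeg, hc1, hf.leadingCoeff, (by omega : n - (n - 1) = 1)] at this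
      simpa using this.symm
    have he2 : f.roots.esymm 2 = 0 := by
      have := Polynomial.coeff_eq_esymm_roots_of_card hcard
        (k := n - 2) (by omega)
      rw [hdeg, hc2, hf.leadingCoeff, (by omega : n - (n - 2) = 2)] at this
      simpa using this.symm
    have hsq : (f.roots.map (· ^ 2)).sum = 0 := by
      rw [my_newton2, ← my_esymm_one, he1, he2]; ring
    -- all roots are zero
    obtain ⟨θ, hθ⟩ := hline
    set w : ℂ := Complex.exp ((θ : ℂ) * Complex.I) with hw
    have hwne : w ≠ 0 := Complex.exp_ne_zero _
    have hfne : f ≠ 0 := hf.ne_zero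
    -- real-part sum
    have hkey : ∀ z ∈ f.roots, ∃ t : ℝ, z = (t : ℂ) * w := by
      intro z hz
      exact hθ z ((Polynomial.mem_roots hfne).mp hz)
    set g : ℂ → ℝ := fun z => ((z / w) ^ 2).re with hg
    have hgz : ∀ z ∈ f.roots, ((g z : ℝ) : ℂ) = (z / w) ^ 2 ∧ 0 ≤ g z := by
      intro z hz
      obtain ⟨t, ht⟩ := hkey z hz
      have hzw : z / w = (t : ℂ) := by
        rw [ht]; field_simp
      constructor
      · rw [hg]
        simp only [hzw]
        simp [← Complex.ofReal_pow]
      · rw [hg]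
        simp only [hzw]
        rw [← Complex.ofReal_pow, Complex.ofReal_re]
        positivity
    have hsum : ((f.roots.map g).sum : ℝ) = 0 := by
      have h1 : (f.roots.map (fun z => ((g z : ℝ) : ℂ))).sum = 0 := by
        rw [Multiset.map_congr rfl (fun z hz => (hgz z hz).1)]
        have : (f.roots.map (fun z => (z / w) ^ 2)).sum
            = (f.roots.map (· ^ 2)).sum * ((w ^ 2)⁻¹) := by
          rw [← Multiset.sum_map_mul_right]
          congr 1
          refine Multiset.map_congr rfl fun z _ => ?_
          rw [div_pow]; ring
        rw [this, hsq, zero_mul]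
      have h2 : (f.roots.map (fun z => ((g z : ℝ) : ℂ))).sum
          = (((f.roots.map g).sum : ℝ) : ℂ) := by
        rw [show (fun z : ℂ => ((g z : ℝ) : ℂ)) = (fun t : ℝ => (t : ℂ)) ∘ g from rfl,
          ← Multiset.map_map]
        exact (map_multiset_sum Complex.ofRealHom _).symm
      exact_mod_cast h2 ▸ h1
    have hzero : ∀ z ∈ f.roots, z = 0 := by
      intro z hz
      have hle : g z ≤ (f.roots.map g).sum := by
        refine Multiset.single_le_sum (fun x hx => ?_) _ (Multiset.mem_map_of_mem g hz)
        obtain ⟨y, hy, rfl⟩ := Multiset.mem_map.mp hx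
        exact (hgz y hy).2
      have hge : 0 ≤ g z := (hgz z hz).2
      have : g z = 0 := le_antisymm (hsum ▸ hle) hge
      have h0 : ((z / w) ^ 2 : ℂ) = 0 := by rw [← (hgz z hz).1, this]; simp
      have : z / w = 0 := pow_eq_zero_iff (n := 2) (by norm_num) |>.mp h0
      field_simp at this
      simpa using this
    have := hsplits.eq_prod_roots_of_monic hf
    have hmap : f.roots.map (fun a => X - C a) = f.roots.map (fun _ => (X : ℂ[X])) :=
      Multiset.map_congr rfl (fun z hz => by rw [hzero z hz]; simp)
    rw [this, hmap, Multiset.map_const', Multiset.prod_replicate, hcard, hdeg]
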